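/- Let Ω = {(v₁,v₂) ∈ ℝ² | v₂ ≤ |v₁|}. Then the set of stable Ω-dense directions from the origin (0,0) is 𝒟^Ω_stab((0,0)) = {(v₁,v₂) ∈ ℝ² | v₂ ≤ −|v₁|}. -/

import Mathlib

def IsDenseDir {m : ℕ} (Ω : Set (EuclideanSpace ℝ (Fin m)))
    (v v' : EuclideanSpace ℝ (Fin m)) : Prop :=
  ∀ ε > (0 : ℝ), ∃ α : ℝ, 0 < α ∧ α < ε ∧ α ≤ 1 ∧ v + α • (v' - v) ∈ Ω

def IsStableDenseDir {m : ℕ} (Ω : Set (EuclideanSpace ℝ (Fin m)))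
    (v v' : EuclideanSpace ℝ (Fin m)) : Prop :=
  ∃ ε > (0 : ℝ), ∀ v'' ∈ Metric.closedBall v ε ∩ Ω, IsDenseDir Ω v'' v'

theorem stmt3 :
    {v' | IsStableDenseDir {v : EuclideanSpace ℝ (Fin 2) | v 1 ≤ |v 0|}
        (0 : EuclideanSpace ℝ (Fin 2)) v'} =
      {v' : EuclideanSpace ℝ (Fin 2) | v' 1 ≤ -|v' 0|} := by
  ext v'
  simp only [Set.mem_setOf_eq]
  constructor
  · -- hard direction: stable dense ⇒ v' 1 ≤ -|v' 0|
    rintro ⟨ε, hε, hst⟩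
    by_contra hcon
    push_neg at hcon
    -- hcon : -|v' 0| < v' 1
    by_cases hbig : |v' 0| < v' 1
    · -- take v'' = 0
      have h0 : (0 : EuclideanSpace ℝ (Fin 2)) ∈
          Metric.closedBall (0 : EuclideanSpace ℝ (Fin 2)) ε ∩
          {v : EuclideanSpace ℝ (Fin 2) | v 1 ≤ |v 0|} := by
        constructor
        · exact Metric.mem_closedBall_self hε.le
        · simp [Set.mem_setOf_eq]
      obtain ⟨α, hα0, hα1, hα2, hmem⟩ := hst 0 h0 1 one_pos
      simp only [Set.mem_setOf_eq] at hmem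
      have e1 : ((0 : EuclideanSpace ℝ (Fin 2)) + α • (v' - 0)) 1 = α * v' 1 := by
        show 0 + α * (v' 1 - 0) = α * v' 1; ring
      have e0 : ((0 : EuclideanSpace ℝ (Fin 2)) + α • (v' - 0)) 0 = α * v' 0 := by
        show 0 + α * (v' 0 - 0) = α * v' 0; ring
      rw [e1, e0, abs_mul, abs_of_pos hα0] at hmem
      nlinarith
    · -- -|v' 0| < v' 1 ≤ |v' 0|, so v' 0 ≠ 0
      push_neg at hbig
      have hne : v' 0 ≠ 0 := by
        intro h; rw [h] at hcon hbig; simp at hcon hbig; linarith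
      rcases hne.lt_or_gt with hneg | hpos
      · -- v' 0 < 0 : take v'' = (t, t)
        set t : ℝ := ε / 2 with ht
        have htpos : 0 < t := by positivity
        set w : EuclideanSpace ℝ (Fin 2) := WithLp.toLp 2 ![t, t] with hw
        have hw0 : w 0 = t := rfl
        have hw1 : w 1 = t := rfl
        have hwmem : w ∈ Metric.closedBall (0 : EuclideanSpace ℝ (Fin 2)) ε ∩
            {v : EuclideanSpace ℝ (Fin 2) | v 1 ≤ |v 0|} := by
          constructor
          · rw [Metric.mem_closedBall, dist_zero_right, EuclideanSpace.norm_eq]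
            have : ∑ i, ‖w i‖ ^ 2 = t ^ 2 + t ^ 2 := by
              simp [Fin.sum_univ_two, hw0, hw1, sq_abs]
            rw [this]
            have h1 : t ^ 2 + t ^ 2 ≤ ε ^ 2 := by nlinarith
            calc Real.sqrt (t ^ 2 + t ^ 2) ≤ Real.sqrt (ε ^ 2) := Real.sqrt_le_sqrt h1
              _ = ε := Real.sqrt_sq hε.le
          · simp only [Set.mem_setOf_eq, hw0, hw1]
            exact le_abs_self t
        set ε₀ : ℝ := min (t / (t - v' 0)) 1 with hε₀
        have hden : 0 < t - v' 0 := by linarith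
        have hε₀pos : 0 < ε₀ := lt_min (by positivity) one_pos
        obtain ⟨α, hα0, hα1, hα2, hmem⟩ := hst w hwmem ε₀ hε₀pos
        simp only [Set.mem_setOf_eq] at hmem
        have e1 : (w + α • (v' - w)) 1 = t + α * (v' 1 - t) := rfl
        have e0 : (w + α • (v' - w)) 0 = t + α * (v' 0 - t) := rfl
        rw [e1, e0] at hmem
        have hαlt : α < t / (t - v' 0) := lt_of_lt_of_le hα1 (min_le_left _ _)
        have hx : 0 < t + α * (v' 0 - t) := by
          rw [lt_div_iff₀ hden] at hαlt
          nlinarith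
        rw [abs_of_pos hx] at hmem
        -- hmem : t + α*(v' 1 - t) ≤ t + α*(v' 0 - t), but v' 0 < v' 1
        have : v' 1 > v' 0 := by
          have : -|v' 0| = v' 0 := by rw [abs_of_neg hneg]; ring
          linarith [hcon]
        nlinarith
      · -- v' 0 > 0 : take v'' = (-t, t)
        set t : ℝ := ε / 2 with ht
        have htpos : 0 < t := by positivity
        set w : EuclideanSpace ℝ (Fin 2) := WithLp.toLp 2 ![-t, t] with hw
        have hw0 : w 0 = -t := rfl
        have hw1 : w 1 = t := rfl
        have hwmem : w ∈ Metric.closedBall (0 : EuclideanSpace ℝ (Fin 2)) ε ∩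
            {v : EuclideanSpace ℝ (Fin 2) | v 1 ≤ |v 0|} := by
          constructor
          · rw [Metric.mem_closedBall, dist_zero_right, EuclideanSpace.norm_eq]
            have : ∑ i, ‖w i‖ ^ 2 = t ^ 2 + t ^ 2 := by
              simp [Fin.sum_univ_two, hw0, hw1, sq_abs]
            rw [this]
            have h1 : t ^ 2 + t ^ 2 ≤ ε ^ 2 := by nlinarith
            calc Real.sqrt (t ^ 2 + t ^ 2) ≤ Real.sqrt (ε ^ 2) := Real.sqrt_le_sqrt h1
              _ = ε := Real.sqrt_sq hε.le
          · simp only [Set.mem_setOf_eq, hw0, hw1, abs_neg, abs_of_pos htpos, le_refl]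
        set ε₀ : ℝ := min (t / (v' 0 + t)) 1 with hε₀
        have hden : 0 < v' 0 + t := by linarith
        have hε₀pos : 0 < ε₀ := lt_min (by positivity) one_pos
        obtain ⟨α, hα0, hα1, hα2, hmem⟩ := hst w hwmem ε₀ hε₀pos
        simp only [Set.mem_setOf_eq] at hmem
        have e1 : (w + α • (v' - w)) 1 = t + α * (v' 1 - t) := rfl
        have e0 : (w + α • (v' - w)) 0 = -t + α * (v' 0 - -t) := rfl
        rw [e1, e0] at hmem
        have hαlt : α < t / (v' 0 + t) := lt_of_lt_of_le hα1 (min_le_left _ _)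
        have hx : -t + α * (v' 0 - -t) < 0 := by
          rw [lt_div_iff₀ hden] at hαlt
          nlinarith
        rw [abs_of_neg hx] at hmem
        -- hmem : t + α*(v' 1 - t) ≤ t - α*(v' 0 + t), but v' 1 > -v' 0
        have : v' 1 > -v' 0 := by
          have : -|v' 0| = -v' 0 := by rw [abs_of_pos hpos]
          linarith [hcon]
        nlinarith
  · -- easy direction
    intro hv'
    refine ⟨1, one_pos, fun w hw ε' hε' => ?_⟩
    refine ⟨min ε' 1 / 2, by positivity, ?_, ?_, ?_⟩
    · calc min ε' 1 / 2 < min ε' 1 := by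
            have : 0 < min ε' 1 := lt_min hε' one_pos
            linarith
        _ ≤ ε' := min_le_left _ _
    · calc min ε' 1 / 2 ≤ 1 / 2 := by
            have := min_le_right ε' 1; linarith
        _ ≤ 1 := by norm_num
    · set α := min ε' 1 / 2 with hα
      have hα0 : 0 < α := by positivity
      have hα1 : α ≤ 1 := by
        have := min_le_right ε' 1
        simp only [hα]; linarith
      simp only [Set.mem_setOf_eq]
      have e1 : (w + α • (v' - w)) 1 = w 1 + α * (v' 1 - w 1) := rfl
      have e0 : (w + α • (v' - w)) 0 = w 0 + α * (v' 0 - w 0) := rfl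
      rw [e1, e0]
      have hw1 : w 1 ≤ |w 0| := hw.2
      -- goal: w1 + α(v'1 - w1) ≤ |w0 + α(v'0 - w0)|
      have key : (1 - α) * |w 0| - α * |v' 0| ≤ |w 0 + α * (v' 0 - w 0)| := by
        have h1 : |(1 - α) * w 0| - |(-(α * v' 0))| ≤ |(1 - α) * w 0 - (-(α * v' 0))| :=
          abs_sub_abs_le_abs_sub _ _
        have h2 : |(1 - α) * w 0| = (1 - α) * |w 0| := by
          rw [abs_mul, abs_of_nonneg (by linarith)]
        have h3 : |(-(α * v' 0))| = α * |v' 0| := by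
          rw [abs_neg, abs_mul, abs_of_pos hα0]
        have h4 : (1 - α) * w 0 - (-(α * v' 0)) = w 0 + α * (v' 0 - w 0) := by ring
        rw [h2, h3, h4] at h1
        exact h1
      nlinarith [le_abs_self (v' 0), neg_abs_le (v' 0)]
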